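/- Let $(\Omega,\Sigma,\lambda)$ be a probability space, let $h \in L_\infty(\lambda)$ with $\|h\|_\infty = 1$, let $A \in \Sigma$ with $\lambda(A) > 0$, let $\varepsilon \in (0,1)$, and suppose $f \in L_1(\lambda)$ satisfies $\int_\Omega f h\, d\lambda = 0$ and there is a measurable set $A_n \subset A$ with $\lambda(A_n) \ge (1-\varepsilon)\lambda(A)$ and $|f(t)h(t) - 1| < \varepsilon$ for all $t \in A_n$. Then $\|f\|_1 \ge 2(1-\varepsilon)^2 \lambda(A)$. -/

import Mathlib

open MeasureTheory ENNReal

theorem stmt3 {Ω : Type*} [MeasurableSpace Ω] (μ : Measure Ω) [IsProbabilityMeasure μ]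
    (h : Ω → ℂ) (hh : eLpNorm h ⊤ μ = 1)
    (A : Set Ω) (hA : MeasurableSet A) (hApos : 0 < μ A)
    (ε : ℝ) (hε0 : 0 < ε) (hε1 : ε < 1)
    (f : Ω → ℂ) (hf : Integrable f μ) (hfh : Integrable (fun t => f t * h t) μ)
    (hint : ∫ t, f t * h t ∂μ = 0)
    (An : Set Ω) (hAn : MeasurableSet An) (hAnA : An ⊆ A)
    (hAnmeas : (1 - ε) * (μ A).toReal ≤ (μ An).toReal)
    (hclose : ∀ t ∈ An, ‖f t * h t - 1‖ < ε) :
    2 * (1 - ε) ^ 2 * (μ A).toReal ≤ ∫ t, ‖f t‖ ∂μ := by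
  set g : Ω → ℂ := fun t => f t * h t with hg
  -- |h| ≤ 1 a.e.
  have hhle : ∀ᵐ t ∂μ, ‖h t‖ ≤ 1 := by
    have := ae_le_eLpNormEssSup (f := h) (μ := μ)
    rw [← eLpNorm_exponent_top, hh] at this
    filter_upwards [this] with t ht
    have : (‖h t‖₊ : ℝ≥0∞) ≤ 1 := ht
    exact_mod_cast (by simpa using this : ‖h t‖₊ ≤ 1)
  have hgf : ∀ᵐ t ∂μ, ‖g t‖ ≤ ‖f t‖ := by
    filter_upwards [hhle] with t ht
    calc ‖g t‖ = ‖f t‖ * ‖h t‖ := norm_mul _ _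
    _ ≤ ‖f t‖ * 1 := by gcongr
    _ = ‖f t‖ := mul_one _
  -- Re(g) ≥ 1 - ε on An
  have hre : ∀ t ∈ An, 1 - ε ≤ (g t).re := by
    intro t ht
    have h1 := hclose t ht
    have h2 : |(g t - 1).re| ≤ ‖g t - 1‖ := Complex.abs_re_le_norm _
    have h3 : (g t - 1).re = (g t).re - 1 := by simp
    rw [h3] at h2
    have := abs_le.mp (h2.trans h1.le)
    linarith [this.1]
  have hAnfin : μ An ≠ ⊤ := measure_ne_top _ _
  -- ∫_{An} Re g ≥ (1-ε) μ(An)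
  have key1 : (1 - ε) * (μ An).toReal ≤ ∫ t in An, (g t).re ∂μ := by
    have hc : IntegrableOn (fun _ : Ω => (1 - ε)) An μ := integrableOn_const hAnfin
    have hgre : IntegrableOn (fun t => (g t).re) An μ := (hfh.re).integrableOn
    have := setIntegral_mono_on hc hgre hAn (fun t ht => hre t ht)
    rwa [setIntegral_const, smul_eq_mul, mul_comm] at this
  -- ∫_{An} Re g ≤ ∫_{An} ‖g‖
  have key2 : ∫ t in An, (g t).re ∂μ ≤ ∫ t in An, ‖g t‖ ∂μ := by
    refine setIntegral_mono (hfh.re).integrableOn hfh.norm.integrableOn ?_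
    intro t
    simpa using Complex.re_le_norm (g t)
  -- ∫_{An} Re g ≤ ∫_{Anᶜ} ‖g‖
  have hsplit : ∫ t in An, g t ∂μ + ∫ t in Anᶜ, g t ∂μ = 0 := by
    rw [integral_add_compl hAn hfh]; exact hint
  have key3 : ∫ t in An, (g t).re ∂μ ≤ ∫ t in Anᶜ, ‖g t‖ ∂μ := by
    have h1 : ∫ t in An, (g t).re ∂μ = (∫ t in An, g t ∂μ).re :=
      (integral_re hfh.integrableOn).symm ▸ rfl
    have h2 : ∫ t in An, g t ∂μ = -∫ t in Anᶜ, g t ∂μ := by linear_combination hsplit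
    calc ∫ t in An, (g t).re ∂μ = (∫ t in An, g t ∂μ).re := h1
      _ = (-∫ t in Anᶜ, g t ∂μ).re := by rw [h2]
      _ ≤ ‖-∫ t in Anᶜ, g t ∂μ‖ := by
          simpa using Complex.re_le_norm (-∫ t in Anᶜ, g t ∂μ)
      _ = ‖∫ t in Anᶜ, g t ∂μ‖ := norm_neg _
      _ ≤ ∫ t in Anᶜ, ‖g t‖ ∂μ := norm_integral_le_integral_norm _
  have htotal : 2 * (1 - ε) * (μ An).toReal ≤ ∫ t, ‖g t‖ ∂μ := by
    rw [← integral_add_compl hAn hfh.norm]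
    nlinarith [key1, key2, key3]
  have hfinal : ∫ t, ‖g t‖ ∂μ ≤ ∫ t, ‖f t‖ ∂μ :=
    integral_mono_ae hfh.norm hf.norm hgf
  have hmono : 2 * (1 - ε) ^ 2 * (μ A).toReal ≤ 2 * (1 - ε) * (μ An).toReal := by
    have h1ε : (0:ℝ) < 1 - ε := by linarith
    nlinarith [hAnmeas]
  linarith
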